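/- Hölder bound for the open triangle (Lemma 4.16). Fix a dimension d > 6 and constants 0 < c ≤ C₀, and let τ: ℤ^d → [0,1] satisfy τ(0) = 1, τ(−x) = τ(x), and c(1+|x|)^{2−d} ≤ τ(x) ≤ C₀(1+|x|)^{2−d} for all x ∈ ℤ^d ∖ {0}. Then there is a constant C, depending only on d, c, C₀, such that for all u, u' ∈ ℤ^d: ∑_{x ∈ ℤ^d} τ(x) τ(x−u') τ(x−u) ≤ C ( τ(u) τ(u−u') τ(u') )^{1/2}. -/

import Mathlib

open scoped ENNReal

/-- The vertex set of the hypercubic lattice `ℤ^d`. -/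
abbrev Vtx (d : ℕ) := Fin d → ℤ

/-- The Euclidean norm of a point of `ℤ^d`. -/
noncomputable def znorm {d : ℕ} (x : Vtx d) : ℝ :=
  Real.sqrt (∑ i, ((x i : ℝ)) ^ 2)

namespace HolderOpenTriangle

noncomputable def toE {d : ℕ} (x : Vtx d) : EuclideanSpace ℝ (Fin d) :=
  (WithLp.equiv 2 (Fin d → ℝ)).symm (fun i => (x i : ℝ))

lemma znorm_nonneg {d : ℕ} (x : Vtx d) : 0 ≤ znorm x := Real.sqrt_nonneg _

lemma znorm_eq_norm {d : ℕ} (x : Vtx d) : znorm x = ‖toE x‖ := by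
  rw [EuclideanSpace.norm_eq, znorm]
  congr 1
  refine Finset.sum_congr rfl fun i _ => ?_
  rw [toE, WithLp.equiv_symm_apply, PiLp.toLp_apply, Real.norm_eq_abs, sq_abs]

lemma znorm_triangle {d : ℕ} (x y : Vtx d) :
    znorm (x - y) ≤ znorm x + znorm y := by
  rw [znorm_eq_norm, znorm_eq_norm, znorm_eq_norm]
  have h : toE (x - y) = toE x - toE y := by
    ext i
    simp only [toE, WithLp.equiv_symm_apply, PiLp.toLp_apply]
    show ((x i - y i : ℤ) : ℝ) = (x i : ℝ) - (y i : ℝ)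
    push_cast; ring
  rw [h]
  exact norm_sub_le _ _

lemma znorm_zero {d : ℕ} : znorm (0 : Vtx d) = 0 := by
  simp [znorm]

lemma abs_coord_le_znorm {d : ℕ} (x : Vtx d) (i : Fin d) : |(x i : ℝ)| ≤ znorm x := by
  rw [← Real.sqrt_sq_eq_abs]
  apply Real.sqrt_le_sqrt
  exact Finset.single_le_sum (fun j _ => sq_nonneg ((x j : ℝ))) (Finset.mem_univ i)

lemma sum_int_pow {p : ℝ} (hp : 1 < p) :
    Summable (fun n : ℤ => (1 + |(n : ℝ)|) ^ (-p)) := by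
  have hnat : Summable (fun n : ℕ => (1 + (n : ℝ)) ^ (-p)) := by
    have h0 : Summable (fun n : ℕ => (((n : ℝ)) ^ p)⁻¹) := Real.summable_nat_rpow_inv.2 hp
    have h1 : Summable (fun n : ℕ => ((((n + 1) : ℕ) : ℝ) ^ p)⁻¹) :=
      (summable_nat_add_iff 1).2 h0
    refine h1.congr fun n => ?_
    rw [Real.rpow_neg (by positivity)]
    push_cast
    ring_nf
  apply Summable.of_nat_of_neg
  · refine hnat.congr fun n => ?_
    simp
  · refine hnat.congr fun n => ?_
    simp

lemma sum_pi_prod (g : ℤ → ℝ) (hg0 : ∀ n, 0 ≤ g n) (hg : Summable g) :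
    ∀ n : ℕ, Summable (fun x : Fin n → ℤ => ∏ i, g (x i)) := by
  intro n
  induction n with
  | zero => exact Summable.of_finite
  | succ n ih =>
      have h : Summable (fun p : ℤ × (Fin n → ℤ) => g p.1 * ∏ i, g (p.2 i)) := by
        apply Summable.mul_of_nonneg hg ih
        · exact fun m => hg0 m
        · exact fun x => Finset.prod_nonneg fun i _ => hg0 _
      rw [← (Fin.consEquiv fun _ => ℤ).summable_iff]
      refine h.congr fun p => ?_
      simp only [Function.comp_apply, Fin.prod_univ_succ, Fin.consEquiv, Equiv.coe_fn_mk]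
      simp [Fin.cons]

lemma base_alg {x y z P Q R : ℝ} (hx : 1 ≤ x) (hxy : x ≤ y) (hyz : y ≤ z)
    (hP : 0 ≤ P) (hQ : 0 ≤ Q) (hR : 0 ≤ R)
    (hP2 : P ≤ 2 * y) (hQ2 : Q ≤ 2 * z) (hR2 : R ≤ 2 * z) :
    P * Q * R * x ^ 3 ≤ 8 * (x * y * z) ^ 2 := by
  have hx0 : (0:ℝ) < x := lt_of_lt_of_le one_pos hx
  have hy0 : (0:ℝ) < y := lt_of_lt_of_le hx0 hxy
  have hz0 : (0:ℝ) < z := lt_of_lt_of_le hy0 hyz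
  have h1 : P * Q * R * x ^ 3 ≤ (2*y) * (2*z) * (2*z) * x ^ 3 := by
    have h : P * Q * R ≤ (2*y) * (2*z) * (2*z) :=
      mul_le_mul (mul_le_mul hP2 hQ2 hQ (by positivity)) hR2 hR (by positivity)
    exact mul_le_mul_of_nonneg_right h (by positivity)
  have h2 : (2*y) * (2*z) * (2*z) * x ^ 3 ≤ 8 * (x * y * z) ^ 2 := by
    have hxy3 : x ^ 3 ≤ x ^ 2 * y := by
      calc x ^ 3 = x ^ 2 * x := by ring
        _ ≤ x ^ 2 * y := mul_le_mul_of_nonneg_left hxy (by positivity)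
    calc (2*y) * (2*z) * (2*z) * x ^ 3 ≤ (2*y) * (2*z) * (2*z) * (x^2*y) :=
          mul_le_mul_of_nonneg_left hxy3 (by positivity)
      _ = 8 * (x * y * z) ^ 2 := by ring
  linarith

lemma key_alg {a b e A B E : ℝ} (ha : 1 ≤ a) (hb : 1 ≤ b) (he : 1 ≤ e)
    (hA : 0 ≤ A) (hB : 0 ≤ B) (hE : 0 ≤ E)
    (hAab : A ≤ a + b) (hBae : B ≤ a + e) (hEbe : E ≤ b + e) :
    A * B * E * (min a (min b e)) ^ 3 ≤ 8 * (a * b * e) ^ 2 := by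
  set μ := min a (min b e) with hμ
  have hm1 : μ ≤ a := min_le_left _ _
  have hm2 : μ ≤ b := le_trans (min_le_right _ _) (min_le_left _ _)
  have hm3 : μ ≤ e := le_trans (min_le_right _ _) (min_le_right _ _)
  have hm0 : (0:ℝ) ≤ μ := le_trans zero_le_one (le_min ha (le_min hb he))
  have habe : 0 ≤ A * B * E := mul_nonneg (mul_nonneg hA hB) hE
  have step : ∀ x : ℝ, μ ≤ x → A*B*E*x^3 ≤ 8*(a*b*e)^2 → A*B*E*μ^3 ≤ 8*(a*b*e)^2 := by
    intro x hx h
    calc A*B*E*μ^3 ≤ A*B*E*x^3 :=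
          mul_le_mul_of_nonneg_left (pow_le_pow_left₀ hm0 hx 3) habe
      _ ≤ 8*(a*b*e)^2 := h
  rcases le_total a b with hab | hab <;> rcases le_total a e with hae | hae <;>
    rcases le_total b e with hbe | hbe
  · refine step a hm1 ?_
    have h := base_alg ha hab hbe hA hB hE (by linarith) (by linarith) (by linarith)
    exact h
  · refine step a hm1 ?_
    have h := base_alg ha hae hbe hB hA hE (by linarith) (by linarith) (by linarith)
    calc A*B*E*a^3 = B*A*E*a^3 := by ring
      _ ≤ 8*(a*e*b)^2 := h
      _ = 8*(a*b*e)^2 := by ring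
  · refine step e hm3 ?_
    have h := base_alg he hae hab hB hE hA (by linarith) (by linarith) (by linarith)
    calc A*B*E*e^3 = B*E*A*e^3 := by ring
      _ ≤ 8*(e*a*b)^2 := h
      _ = 8*(a*b*e)^2 := by ring
  · refine step e hm3 ?_
    have h := base_alg he hae hab hB hE hA (by linarith) (by linarith) (by linarith)
    calc A*B*E*e^3 = B*E*A*e^3 := by ring
      _ ≤ 8*(e*a*b)^2 := h
      _ = 8*(a*b*e)^2 := by ring
  · refine step b hm2 ?_
    have h := base_alg hb hab hae hA hE hB (by linarith) (by linarith) (by linarith)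
    calc A*B*E*b^3 = A*E*B*b^3 := by ring
      _ ≤ 8*(b*a*e)^2 := h
      _ = 8*(a*b*e)^2 := by ring
  · refine step b hm2 ?_
    have hae' : a ≤ e := by linarith
    have h := base_alg hb hab hae' hA hE hB (by linarith) (by linarith) (by linarith)
    calc A*B*E*b^3 = A*E*B*b^3 := by ring
      _ ≤ 8*(b*a*e)^2 := h
      _ = 8*(a*b*e)^2 := by ring
  · refine step b hm2 ?_
    have h := base_alg hb hbe hae hE hA hB (by linarith) (by linarith) (by linarith)
    calc A*B*E*b^3 = E*A*B*b^3 := by ring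
      _ ≤ 8*(b*e*a)^2 := h
      _ = 8*(a*b*e)^2 := by ring
  · refine step e hm3 ?_
    have h := base_alg he hbe hab hE hB hA (by linarith) (by linarith) (by linarith)
    calc A*B*E*e^3 = E*B*A*e^3 := by ring
      _ ≤ 8*(e*b*a)^2 := h
      _ = 8*(a*b*e)^2 := by ring

lemma key_rpow {a b e A B E m : ℝ} (ha : 1 ≤ a) (hb : 1 ≤ b) (he : 1 ≤ e)
    (hA : 1 ≤ A) (hB : 1 ≤ B) (hE : 1 ≤ E) (hm : 0 < m)
    (hAab : A ≤ a + b) (hBae : B ≤ a + e) (hEbe : E ≤ b + e) :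
    (a * b * e) ^ (-m) ≤
      8 ^ (m/2) * (A * B * E) ^ (-(m/2)) * (min a (min b e)) ^ (-(3*(m/2))) := by
  set μ := min a (min b e) with hμdef
  have hμ1 : 1 ≤ μ := le_min ha (le_min hb he)
  have hμ0 : (0:ℝ) < μ := lt_of_lt_of_le one_pos hμ1
  have hq0 : (0:ℝ) < a * b * e := by positivity
  have hw0 : (0:ℝ) < A * B * E := by positivity
  have halg : A * B * E * μ ^ 3 ≤ 8 * (a * b * e) ^ 2 :=
    key_alg ha hb he (by linarith) (by linarith) (by linarith) hAab hBae hEbe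
  have h3 : (A*B*E) ^ (m/2) * μ ^ (3*(m/2)) ≤ 8 ^ (m/2) * (a*b*e) ^ m := by
    have hr := Real.rpow_le_rpow (by positivity) halg (by positivity : (0:ℝ) ≤ m/2)
    have hL : (A * B * E * μ ^ 3) ^ (m/2) = (A*B*E) ^ (m/2) * μ ^ (3*(m/2)) := by
      rw [Real.mul_rpow hw0.le (by positivity), ← Real.rpow_natCast μ 3,
        ← Real.rpow_mul hμ0.le]
      norm_num
    have hR : (8 * (a * b * e) ^ 2) ^ (m/2) = 8 ^ (m/2) * (a*b*e) ^ m := by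
      rw [Real.mul_rpow (by norm_num) (by positivity), ← Real.rpow_natCast (a*b*e) 2,
        ← Real.rpow_mul hq0.le]
      norm_num
      left
      ring_nf
    rw [hL, hR] at hr
    exact hr
  have hY : (0:ℝ) < (A*B*E) ^ (m/2) * μ ^ (3*(m/2)) := by positivity
  have hgoal : (a*b*e) ^ (-m) ≤ 8 ^ (m/2) / ((A*B*E) ^ (m/2) * μ ^ (3*(m/2))) := by
    rw [le_div_iff₀ hY]
    have h4 : (a*b*e) ^ (-m) * ((A*B*E) ^ (m/2) * μ ^ (3*(m/2))) ≤
        (a*b*e) ^ (-m) * (8 ^ (m/2) * (a*b*e) ^ m) :=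
      mul_le_mul_of_nonneg_left h3 (Real.rpow_nonneg hq0.le _)
    calc (a*b*e) ^ (-m) * ((A*B*E) ^ (m/2) * μ ^ (3*(m/2)))
        ≤ (a*b*e) ^ (-m) * (8 ^ (m/2) * (a*b*e) ^ m) := h4
      _ = 8 ^ (m/2) * ((a*b*e) ^ (-m) * (a*b*e) ^ m) := by ring
      _ = 8 ^ (m/2) := by
          rw [← Real.rpow_add hq0]
          norm_num
  calc (a*b*e) ^ (-m) ≤ 8 ^ (m/2) / ((A*B*E) ^ (m/2) * μ ^ (3*(m/2))) := hgoal
    _ = 8 ^ (m/2) * (A * B * E) ^ (-(m/2)) * μ ^ (-(3*(m/2))) := by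
        rw [Real.rpow_neg hw0.le, Real.rpow_neg hμ0.le, div_eq_mul_inv, mul_inv]
        ring

lemma min_rpow_le_sum {a b e s : ℝ} (ha : 0 < a) (hb : 0 < b) (he : 0 < e) :
    (min a (min b e)) ^ (-s) ≤ a ^ (-s) + b ^ (-s) + e ^ (-s) := by
  have h : min a (min b e) = a ∨ min a (min b e) = b ∨ min a (min b e) = e := by
    rcases min_cases a (min b e) with ⟨h1, _⟩ | ⟨h1, _⟩
    · exact Or.inl h1
    · rcases min_cases b e with ⟨h2, _⟩ | ⟨h2, _⟩
      · exact Or.inr (Or.inl (h1.trans h2))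
      · exact Or.inr (Or.inr (h1.trans h2))
  have h1 : (0:ℝ) ≤ a ^ (-s) := Real.rpow_nonneg ha.le _
  have h2 : (0:ℝ) ≤ b ^ (-s) := Real.rpow_nonneg hb.le _
  have h3 : (0:ℝ) ≤ e ^ (-s) := Real.rpow_nonneg he.le _
  rcases h with h | h | h <;> rw [h] <;> linarith

end HolderOpenTriangle

open HolderOpenTriangle in
set_option maxHeartbeats 4000000 in
/-- **Hölder bound for the open triangle** (Lemma 4.16).
If `d > 6` and `τ : ℤ^d → [0,1]` satisfies `τ(0) = 1`, `τ(−x) = τ(x)` and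
two-sided bounds `c(1+|x|)^{2−d} ≤ τ(x) ≤ C₀(1+|x|)^{2−d}` for `x ≠ 0`, then there
is a constant `C = C(d, c, C₀)` with
`∑_x τ(x) τ(x−u') τ(x−u) ≤ C (τ(u) τ(u−u') τ(u'))^{1/2}` for all `u, u'`. -/
theorem holder_open_triangle_bound
    (d : ℕ) (hd : 6 < d) (c C₀ : ℝ) (hc : 0 < c) (hcC : c ≤ C₀) :
    ∃ C : ℝ, 0 < C ∧
      ∀ τ : Vtx d → ℝ,
        (∀ x, 0 ≤ τ x ∧ τ x ≤ 1) →
        τ 0 = 1 →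
        (∀ x, τ (-x) = τ x) →
        (∀ x : Vtx d, x ≠ 0 →
          c * (1 + znorm x) ^ (2 - (d : ℝ)) ≤ τ x ∧
          τ x ≤ C₀ * (1 + znorm x) ^ (2 - (d : ℝ))) →
        ∀ u u' : Vtx d,
          (∑' x : Vtx d, ENNReal.ofReal (τ x * τ (x - u') * τ (x - u))) ≤
            ENNReal.ofReal (C * Real.sqrt (τ u * τ (u - u') * τ u')) := by
  -- basic setup
  set m : ℝ := (d : ℝ) - 2 with hm_def
  have hd7 : (7:ℝ) ≤ (d:ℝ) := by exact_mod_cast hd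
  have hm : 0 < m := by simp only [hm_def]; linarith
  have hexp : (2 - (d : ℝ)) = -m := by simp only [hm_def]; ring
  set s : ℝ := 3 * (m / 2) with hs_def
  have hds : (d:ℝ) < s := by simp only [hs_def, hm_def]; linarith
  have hd0 : (0:ℝ) < (d:ℝ) := by linarith
  set p : ℝ := s / (d:ℝ) with hp_def
  have hp : 1 < p := (lt_div_iff₀ hd0).2 (by linarith)
  have hdp : (d:ℝ) * p = s := by
    simp only [hp_def]
    field_simp
  -- the summable majorant
  set F : Vtx d → ℝ := fun x => (1 + znorm x) ^ (-s) with hF_def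
  have hF0 : ∀ x, 0 ≤ F x := fun x =>
    Real.rpow_nonneg (by linarith [znorm_nonneg x]) _
  set g : ℤ → ℝ := fun n => (1 + |(n : ℝ)|) ^ (-p) with hg_def
  have hg0 : ∀ n, 0 ≤ g n := fun n => Real.rpow_nonneg (by positivity) _
  have hg : Summable g := sum_int_pow hp
  have hF : Summable F := by
    refine Summable.of_nonneg_of_le hF0 ?_ (sum_pi_prod g hg0 hg d)
    intro x
    have hT0 : (0:ℝ) < 1 + znorm x := by linarith [znorm_nonneg x]
    have hPd0 : (0:ℝ) < ∏ i, (1 + |(x i : ℝ)|) :=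
      Finset.prod_pos fun i _ => by positivity
    have hprod : ∏ i, (1 + |(x i : ℝ)|) ≤ (1 + znorm x) ^ (d : ℕ) := by
      calc ∏ i, (1 + |(x i : ℝ)|) ≤ ∏ _i : Fin d, (1 + znorm x) :=
            Finset.prod_le_prod (fun i _ => by positivity)
              (fun i _ => by linarith [abs_coord_le_znorm x i])
        _ = (1 + znorm x) ^ (d : ℕ) := by
            rw [Finset.prod_const, Finset.card_univ, Fintype.card_fin]
    have hgx : ∏ i, g (x i) = (∏ i, (1 + |(x i : ℝ)|)) ^ (-p) := by
      rw [← Real.finset_prod_rpow _ _ (fun i _ => by positivity)]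
    rw [hgx]
    have h1 : F x = ((1 + znorm x) ^ ((d:ℕ):ℝ)) ^ (-p) := by
      rw [← Real.rpow_mul hT0.le]
      simp only [hF_def]
      congr 1
      rw [← hdp]
      push_cast
      ring
    rw [h1]
    apply Real.rpow_le_rpow_of_nonpos hPd0
    · rw [Real.rpow_natCast]
      exact hprod
    · linarith
  set K : ℝ := ∑' x, F x with hK_def
  have hK0 : 0 ≤ K := tsum_nonneg hF0
  -- constants
  set C₁ : ℝ := max C₀ 1 with hC₁_def
  have hC₁1 : (1:ℝ) ≤ C₁ := le_max_right _ _
  have hC₁0 : (0:ℝ) < C₁ := lt_of_lt_of_le one_pos hC₁1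
  set c₁ : ℝ := min c 1 with hc₁_def
  have hc₁0 : (0:ℝ) < c₁ := lt_min hc one_pos
  have hc₁1 : c₁ ≤ 1 := min_le_right _ _
  set M : ℝ := C₁ ^ 3 * 8 ^ (m/2) with hM_def
  have hM0 : (0:ℝ) < M := by positivity
  set c₂ : ℝ := Real.sqrt (c₁ ^ 3) with hc₂_def
  have hc₂0 : (0:ℝ) < c₂ := Real.sqrt_pos.2 (by positivity)
  refine ⟨3 * M * (K + 1) / c₂, by positivity, ?_⟩
  intro τ hτ01 hτ0 hτsymm hτbd u u'
  -- two-sided bounds on τ valid everywhere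
  have hup : ∀ x : Vtx d, τ x ≤ C₁ * (1 + znorm x) ^ (-m) := by
    intro x
    by_cases hx : x = 0
    · subst hx
      rw [hτ0, znorm_zero]
      norm_num
      linarith
    · have h := (hτbd x hx).2
      rw [hexp] at h
      calc τ x ≤ C₀ * (1 + znorm x) ^ (-m) := h
        _ ≤ C₁ * (1 + znorm x) ^ (-m) :=
            mul_le_mul_of_nonneg_right (le_max_left _ _)
              (Real.rpow_nonneg (by linarith [znorm_nonneg x]) _)
  have hlo : ∀ x : Vtx d, c₁ * (1 + znorm x) ^ (-m) ≤ τ x := by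
    intro x
    by_cases hx : x = 0
    · subst hx
      rw [hτ0, znorm_zero]
      norm_num
      linarith
    · have h := (hτbd x hx).1
      rw [hexp] at h
      calc c₁ * (1 + znorm x) ^ (-m) ≤ c * (1 + znorm x) ^ (-m) :=
            mul_le_mul_of_nonneg_right (min_le_left _ _)
              (Real.rpow_nonneg (by linarith [znorm_nonneg x]) _)
        _ ≤ τ x := h
  -- abbreviations for the triangle at (0, u, u')
  set A : ℝ := 1 + znorm u with hA_def
  set B : ℝ := 1 + znorm u' with hB_def
  set E : ℝ := 1 + znorm (u - u') with hE_def
  have hA1 : 1 ≤ A := by simp only [hA_def]; linarith [znorm_nonneg u]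
  have hB1 : 1 ≤ B := by simp only [hB_def]; linarith [znorm_nonneg u']
  have hE1 : 1 ≤ E := by simp only [hE_def]; linarith [znorm_nonneg (u - u')]
  set PP : ℝ := (A * B * E) ^ (-(m/2)) with hPP_def
  have hPP0 : 0 ≤ PP := Real.rpow_nonneg (by positivity) _
  -- pointwise bound
  have hpt : ∀ x : Vtx d, τ x * τ (x - u') * τ (x - u) ≤
      M * PP * (F x + F (x - u) + F (x - u')) := by
    intro x
    set a : ℝ := 1 + znorm x with ha_def
    set b : ℝ := 1 + znorm (x - u) with hb_def
    set e : ℝ := 1 + znorm (x - u') with he_def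
    have ha1 : 1 ≤ a := by simp only [ha_def]; linarith [znorm_nonneg x]
    have hb1 : 1 ≤ b := by simp only [hb_def]; linarith [znorm_nonneg (x - u)]
    have he1 : 1 ≤ e := by simp only [he_def]; linarith [znorm_nonneg (x - u')]
    have hAab : A ≤ a + b := by
      have := znorm_triangle x (x - u)
      have hxx : x - (x - u) = u := by abel
      rw [hxx] at this
      simp only [hA_def, ha_def, hb_def]
      linarith
    have hBae : B ≤ a + e := by
      have := znorm_triangle x (x - u')
      have hxx : x - (x - u') = u' := by abel
      rw [hxx] at this
      simp only [hB_def, ha_def, he_def]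
      linarith
    have hEbe : E ≤ b + e := by
      have := znorm_triangle (x - u') (x - u)
      have hxx : (x - u') - (x - u) = u - u' := by abel
      rw [hxx] at this
      simp only [hE_def, hb_def, he_def]
      linarith
    have step1 : τ x * τ (x - u') * τ (x - u) ≤
        (C₁ * a ^ (-m)) * (C₁ * e ^ (-m)) * (C₁ * b ^ (-m)) := by
      have h1 := hup x
      have h2 := hup (x - u')
      have h3 := hup (x - u)
      have t1 := (hτ01 x).1
      have t2 := (hτ01 (x - u')).1
      have t3 := (hτ01 (x - u)).1
      have hae0 : 0 ≤ C₁ * a ^ (-m) := by positivity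
      have hee0 : 0 ≤ C₁ * e ^ (-m) := by positivity
      apply mul_le_mul (mul_le_mul h1 h2 t2 hae0) h3 t3
      positivity
    have step2 : (C₁ * a ^ (-m)) * (C₁ * e ^ (-m)) * (C₁ * b ^ (-m)) =
        C₁ ^ 3 * (a * b * e) ^ (-m) := by
      rw [Real.mul_rpow (by positivity) (by positivity),
        Real.mul_rpow (by positivity : (0:ℝ) ≤ a) (by positivity : (0:ℝ) ≤ b)]
      ring
    have step3 : (a * b * e) ^ (-m) ≤
        8 ^ (m/2) * (A * B * E) ^ (-(m/2)) * (min a (min b e)) ^ (-(3*(m/2))) :=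
      key_rpow ha1 hb1 he1 hA1 hB1 hE1 hm hAab hBae hEbe
    have step4 : (min a (min b e)) ^ (-(3*(m/2))) ≤ F x + F (x - u) + F (x - u') := by
      have := min_rpow_le_sum (s := 3*(m/2)) (lt_of_lt_of_le one_pos ha1)
        (lt_of_lt_of_le one_pos hb1) (lt_of_lt_of_le one_pos he1)
      simp only [hF_def, ← hs_def, ← ha_def, ← hb_def, ← he_def]
      exact this
    calc τ x * τ (x - u') * τ (x - u)
        ≤ (C₁ * a ^ (-m)) * (C₁ * e ^ (-m)) * (C₁ * b ^ (-m)) := step1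
      _ = C₁ ^ 3 * (a * b * e) ^ (-m) := step2
      _ ≤ C₁ ^ 3 * (8 ^ (m/2) * (A * B * E) ^ (-(m/2)) * (min a (min b e)) ^ (-(3*(m/2)))) := by
          apply mul_le_mul_of_nonneg_left step3 (by positivity)
      _ = M * PP * (min a (min b e)) ^ (-(3*(m/2))) := by
          simp only [hM_def, hPP_def]; ring
      _ ≤ M * PP * (F x + F (x - u) + F (x - u')) := by
          apply mul_le_mul_of_nonneg_left step4 (by positivity)
  -- sum up
  have hsum : (∑' x : Vtx d, ENNReal.ofReal (τ x * τ (x - u') * τ (x - u))) ≤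
      ENNReal.ofReal (M * PP * (K + K + K)) := by
    calc (∑' x : Vtx d, ENNReal.ofReal (τ x * τ (x - u') * τ (x - u)))
        ≤ ∑' x : Vtx d, ENNReal.ofReal (M * PP * (F x + F (x - u) + F (x - u'))) :=
          ENNReal.tsum_le_tsum fun x => ENNReal.ofReal_le_ofReal (hpt x)
      _ = ∑' x : Vtx d, ENNReal.ofReal (M * PP) *
            (ENNReal.ofReal (F x) + ENNReal.ofReal (F (x - u)) + ENNReal.ofReal (F (x - u'))) := by
          refine tsum_congr fun x => ?_
          rw [ENNReal.ofReal_mul (by positivity), ENNReal.ofReal_add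
            (add_nonneg (hF0 _) (hF0 _)) (hF0 _), ENNReal.ofReal_add (hF0 _) (hF0 _)]
      _ = ENNReal.ofReal (M * PP) * ((∑' x : Vtx d, ENNReal.ofReal (F x)) +
            (∑' x : Vtx d, ENNReal.ofReal (F (x - u))) +
            (∑' x : Vtx d, ENNReal.ofReal (F (x - u')))) := by
          rw [ENNReal.tsum_mul_left, ENNReal.tsum_add, ENNReal.tsum_add]
      _ = ENNReal.ofReal (M * PP) * (ENNReal.ofReal K + ENNReal.ofReal K + ENNReal.ofReal K) := by
          have e1 : (∑' x : Vtx d, ENNReal.ofReal (F (x - u))) =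
              ∑' x : Vtx d, ENNReal.ofReal (F x) :=
            (Equiv.subRight u).tsum_eq (fun x => ENNReal.ofReal (F x))
          have e2 : (∑' x : Vtx d, ENNReal.ofReal (F (x - u'))) =
              ∑' x : Vtx d, ENNReal.ofReal (F x) :=
            (Equiv.subRight u').tsum_eq (fun x => ENNReal.ofReal (F x))
          have e3 : (∑' x : Vtx d, ENNReal.ofReal (F x)) = ENNReal.ofReal K :=
            (ENNReal.ofReal_tsum_of_nonneg hF0 hF).symm
          rw [e1, e2, e3]
      _ = ENNReal.ofReal (M * PP * (K + K + K)) := by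
          rw [← ENNReal.ofReal_add hK0 hK0, ← ENNReal.ofReal_add (by linarith) hK0,
            ← ENNReal.ofReal_mul (by positivity)]
  refine le_trans hsum (ENNReal.ofReal_le_ofReal ?_)
  -- final real inequality
  have hsqrt : c₂ * PP ≤ Real.sqrt (τ u * τ (u - u') * τ u') := by
    have l1 := hlo u
    have l2 := hlo (u - u')
    have l3 := hlo u'
    have hABE0 : (0:ℝ) < A * B * E := by positivity
    have hstep : c₁ ^ 3 * (A * B * E) ^ (-m) ≤ τ u * τ (u - u') * τ u' := by
      have hprod : (A * B * E) ^ (-m) = A ^ (-m) * E ^ (-m) * B ^ (-m) := by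
        rw [Real.mul_rpow (by positivity) (by positivity),
          Real.mul_rpow (by positivity : (0:ℝ) ≤ A) (by positivity : (0:ℝ) ≤ B)]
        ring
      rw [hprod]
      have n1 : 0 ≤ c₁ * A ^ (-m) := by positivity
      have n2 : 0 ≤ c₁ * E ^ (-m) := by positivity
      calc c₁ ^ 3 * (A ^ (-m) * E ^ (-m) * B ^ (-m))
          = (c₁ * A ^ (-m)) * (c₁ * E ^ (-m)) * (c₁ * B ^ (-m)) := by ring
        _ ≤ τ u * τ (u - u') * τ u' := by
            apply mul_le_mul (mul_le_mul l1 l2 n2 ((hτ01 u).1)) l3 ?_ ?_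
            · positivity
            · exact mul_nonneg (hτ01 u).1 (hτ01 (u - u')).1
    calc c₂ * PP = Real.sqrt (c₁ ^ 3 * (A * B * E) ^ (-m)) := by
          rw [Real.sqrt_mul (by positivity) ((A * B * E) ^ (-m)), hc₂_def]
          congr 1
          rw [Real.sqrt_eq_rpow, ← Real.rpow_mul hABE0.le]
          simp only [hPP_def]
          congr 1
          ring
      _ ≤ Real.sqrt (τ u * τ (u - u') * τ u') := Real.sqrt_le_sqrt hstep
  have hC2 : 3 * M * (K + 1) / c₂ * c₂ = 3 * M * (K + 1) := by
    field_simp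
  calc M * PP * (K + K + K) ≤ M * PP * (3 * (K + 1)) := by
        apply mul_le_mul_of_nonneg_left (by linarith) (by positivity)
    _ = (3 * M * (K + 1) / c₂) * (c₂ * PP) := by
        field_simp
    _ ≤ (3 * M * (K + 1) / c₂) * Real.sqrt (τ u * τ (u - u') * τ u') := by
        apply mul_le_mul_of_nonneg_left hsqrt (by positivity)
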